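/- Let (G,Γ₁,Γ₂) be a boundary triple for S, and let A, B be bounded linear operators on G such that A B* = B A*, ker M^{A,B} = {0} (so that H^{A,B} is self-adjoint), where M^{A,B}(x₁,x₂) = (A x₁ − B x₂, B x₁ + A x₂) on G ⊕ G. Then for every z in the intersection of the resolvent sets of H^{A,B} and H⁰: the operator B Q(z) − A is injective, for every f ∈ H the vector B γ(z̄)* f lies in the range of B Q(z) − A, and (H^{A,B} − z)⁻¹ f = (H⁰ − z)⁻¹ f − γ(z) (B Q(z) − A)⁻¹ B γ(z̄)* f for all f ∈ H, where γ(z̄)* : H → G is the adjoint of γ(z̄). -/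

import Mathlib

open ContinuousLinearMap

variable {H : Type*} [NormedAddCommGroup H] [InnerProductSpace ℂ H] [CompleteSpace H]
variable {G : Type*} [NormedAddCommGroup G] [InnerProductSpace ℂ G] [CompleteSpace G]

/-- The operator `M^{A,B}` on `G × G`, `(x₁,x₂) ↦ (A x₁ - B x₂, B x₁ + A x₂)`. -/
noncomputable def MAB (A B : G →L[ℂ] G) : (G × G) →L[ℂ] (G × G) :=
  ((A.comp (fst ℂ G G)) - (B.comp (snd ℂ G G))).prod
    ((B.comp (fst ℂ G G)) + (A.comp (snd ℂ G G)))

/-- A bounded operator is boundedly invertible if it has a bounded two-sided inverse. -/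
def IsBoundedlyInvertible {E F : Type*} [NormedAddCommGroup E] [NormedSpace ℂ E]
    [NormedAddCommGroup F] [NormedSpace ℂ F] (T : E →L[ℂ] F) : Prop :=
  ∃ T' : F →L[ℂ] E, (∀ x, T' (T x) = x) ∧ (∀ y, T (T' y) = y)

/-- A densely defined operator is symmetric if `⟪Sφ, ψ⟫ = ⟪φ, Sψ⟫` on its domain. -/
def IsSymmetricPMap (S : H →ₗ.[ℂ] H) : Prop :=
  ∀ φ ψ : S.domain, (inner ℂ (S φ) (ψ : H) : ℂ) = inner ℂ (φ : H) (S ψ)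

/-- A boundary triple `(G, Γ₁, Γ₂)` for a symmetric operator `S`: two boundary maps
on `dom S*` satisfying the abstract Green identity and joint surjectivity. -/
structure BoundaryTriple (S : H →ₗ.[ℂ] H) (G : Type*) [NormedAddCommGroup G]
    [InnerProductSpace ℂ G] [CompleteSpace G] where
  Γ₁ : S.adjoint.domain →ₗ[ℂ] G
  Γ₂ : S.adjoint.domain →ₗ[ℂ] G
  green : ∀ φ ψ : S.adjoint.domain,
    (inner ℂ (φ : H) (S.adjoint ψ) : ℂ) - inner ℂ (S.adjoint φ) (ψ : H)
      = (inner ℂ (Γ₁ φ) (Γ₂ ψ) : ℂ) - inner ℂ (Γ₂ φ) (Γ₁ ψ)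
  surj : Function.Surjective fun φ : S.adjoint.domain => (Γ₁ φ, Γ₂ φ)

/-- The restriction of a partially defined operator `T` to a submodule `K` of its domain. -/
noncomputable def pmapRestrict (T : H →ₗ.[ℂ] H) (K : Submodule ℂ T.domain) : H →ₗ.[ℂ] H where
  domain := K.map T.domain.subtype
  toFun := (T.toFun.comp K.subtype).comp
    (Submodule.equivMapOfInjective T.domain.subtype
      (Submodule.injective_subtype T.domain) K).symm.toLinearMap

/-- The distinguished extension `H⁰`: the restriction of `S*` to `ker Γ₁`. -/
noncomputable def H0 (S : H →ₗ.[ℂ] H) (BT : BoundaryTriple S G) : H →ₗ.[ℂ] H :=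
  pmapRestrict S.adjoint (LinearMap.ker BT.Γ₁)

/-- The extension `H^{A,B}`: the restriction of `S*` to `{φ : A Γ₁ φ = B Γ₂ φ}`. -/
noncomputable def HAB (S : H →ₗ.[ℂ] H) (BT : BoundaryTriple S G) (A B : G →L[ℂ] G) :
    H →ₗ.[ℂ] H :=
  pmapRestrict S.adjoint
    (LinearMap.ker ((A.toLinearMap.comp BT.Γ₁) - (B.toLinearMap.comp BT.Γ₂)))

/-- `R` is the resolvent of `T` at `z`: a bounded, everywhere defined two-sided inverse
of `T - z`. -/
def IsResolventOf (T : H →ₗ.[ℂ] H) (z : ℂ) (R : H →L[ℂ] H) : Prop :=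
  (∀ f : H, ∃ φ : T.domain, (φ : H) = R f ∧ T φ - z • (φ : H) = f) ∧
  (∀ φ : T.domain, R (T φ - z • (φ : H)) = φ)

/-- `z` is in the resolvent set of `T`. -/
def InResolventSet (T : H →ₗ.[ℂ] H) (z : ℂ) : Prop := ∃ R, IsResolventOf T z R

/-- `γz` is the `Γ`-field at `z`: the inverse of `Γ₁` restricted to the deficiency
space `N_z = ker (S* - z)`. -/
def IsGammaField (S : H →ₗ.[ℂ] H) (BT : BoundaryTriple S G) (z : ℂ) (γz : G →L[ℂ] H) : Prop :=
  (∀ ξ : G, ∃ φ : S.adjoint.domain, (φ : H) = γz ξ ∧ S.adjoint φ = z • (φ : H) ∧ BT.Γ₁ φ = ξ) ∧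
  (∀ φ : S.adjoint.domain, S.adjoint φ = z • (φ : H) → γz (BT.Γ₁ φ) = (φ : H))

/-- `Qz` is the `Q`-function (Weyl function) at `z`: `Qz = Γ₂ ∘ γz`. -/
def IsQFunction (S : H →ₗ.[ℂ] H) (BT : BoundaryTriple S G) (z : ℂ)
    (γz : G →L[ℂ] H) (Qz : G →L[ℂ] G) : Prop :=
  IsGammaField S BT z γz ∧
    ∀ φ : S.adjoint.domain, S.adjoint φ = z • (φ : H) → Qz (BT.Γ₁ φ) = BT.Γ₂ φ

/-- Specification of `pmapRestrict`: every element of the restricted domain comes from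
an element of `K`, and the restricted map agrees with `T` there. -/
lemma pmapRestrict_spec (T : H →ₗ.[ℂ] H) (K : Submodule ℂ T.domain)
    (φ : (pmapRestrict T K).domain) :
    ∃ ψ : T.domain, ψ ∈ K ∧ (ψ : H) = (φ : H) ∧ pmapRestrict T K φ = T ψ := by
  obtain ⟨ψ, hψK, hcoe⟩ := φ.2
  refine ⟨ψ, hψK, hcoe, ?_⟩
  have he : (Submodule.equivMapOfInjective T.domain.subtype
      (Submodule.injective_subtype T.domain) K).symm ⟨(φ : H), φ.2⟩ = ⟨ψ, hψK⟩ := by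
    rw [LinearEquiv.symm_apply_eq]
    exact Subtype.ext (by simpa using hcoe.symm)
  show ((T.toFun.comp K.subtype).comp
      (Submodule.equivMapOfInjective T.domain.subtype
        (Submodule.injective_subtype T.domain) K).symm.toLinearMap) φ = T ψ
  show (T.toFun.comp K.subtype) ((Submodule.equivMapOfInjective T.domain.subtype
      (Submodule.injective_subtype T.domain) K).symm ⟨(φ : H), φ.2⟩) = T ψ
  rw [he]
  rfl

/-- `Γ₂` applied to an element of `ker Γ₁` solving `(S* - z)φ₀ = f` equals `γ(z̄)* f`. -/
lemma gamma_adjoint_eq (S : H →ₗ.[ℂ] H) (BT : BoundaryTriple S G) (z : ℂ)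
    (γzbar : G →L[ℂ] H) (hγ : IsGammaField S BT (starRingEnd ℂ z) γzbar)
    (φ0 : S.adjoint.domain) (h1 : BT.Γ₁ φ0 = 0) (f : H)
    (hf : S.adjoint φ0 - z • (φ0 : H) = f) :
    BT.Γ₂ φ0 = adjoint γzbar f := by
  apply ext_inner_left ℂ
  intro ξ
  obtain ⟨η, hηc, hηeig, hηΓ⟩ := hγ.1 ξ
  have green := BT.green η φ0
  rw [h1, hηΓ, inner_zero_right, sub_zero] at green
  have lhs : (inner ℂ ((η : H)) (S.adjoint φ0) : ℂ) - inner ℂ (S.adjoint η) ((φ0 : H))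
      = inner ℂ ((η : H)) f := by
    rw [hηeig, ← hf, inner_sub_right, inner_smul_right, inner_smul_left]
    simp [Complex.conj_conj]
  rw [lhs] at green
  rw [ContinuousLinearMap.adjoint_inner_right, ← hηc, ← green]

/-- Core construction for Krein's formula: from the two resolvents, produce the
parameter `u`. -/
lemma krein_key (S : H →ₗ.[ℂ] H) (BT : BoundaryTriple S G) (A B : G →L[ℂ] G)
    (z : ℂ) (γz γzbar : G →L[ℂ] H) (Qz : G →L[ℂ] G)
    (hγbar : IsGammaField S BT (starRingEnd ℂ z) γzbar)
    (hQ : IsQFunction S BT z γz Qz)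
    (R0 RAB : H →L[ℂ] H)
    (hR0 : IsResolventOf (H0 S BT) z R0) (hRAB : IsResolventOf (HAB S BT A B) z RAB)
    (f : H) :
    ∃ u : G, (B ∘L Qz - A) u = B (adjoint γzbar f) ∧ RAB f = R0 f - γz u := by
  obtain ⟨φ', hφ'c, hφ'f⟩ := hRAB.1 f
  obtain ⟨ψAB, hK, hcoeAB, hapAB⟩ := pmapRestrict_spec S.adjoint _ φ'
  obtain ⟨φ0', hφ0c, hφ0f⟩ := hR0.1 f
  obtain ⟨ψ0, hK0, hcoe0, hap0⟩ := pmapRestrict_spec S.adjoint _ φ0'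
  have hΓ10 : BT.Γ₁ ψ0 = 0 := hK0
  have hEq1 : S.adjoint ψAB - z • ((ψAB : H)) = f := by
    rw [hcoeAB, ← hapAB]; exact hφ'f
  have hEq0 : S.adjoint ψ0 - z • ((ψ0 : H)) = f := by
    rw [hcoe0, ← hap0]; exact hφ0f
  set ψ : S.adjoint.domain := ψAB - ψ0 with hψdef
  have hψc : ((ψ : H)) = (ψAB : H) - (ψ0 : H) := rfl
  have heig : S.adjoint ψ = z • ((ψ : H)) := by
    rw [hψdef, S.adjoint.map_sub, hψc, smul_sub]
    have h1 : S.adjoint ψAB = f + z • ((ψAB : H)) := by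
      rw [← hEq1]; abel
    have h0 : S.adjoint ψ0 = f + z • ((ψ0 : H)) := by
      rw [← hEq0]; abel
    rw [h1, h0]; abel
  have hγψ : γz (BT.Γ₁ ψ) = ((ψ : H)) := hQ.1.2 ψ heig
  have hQψ : Qz (BT.Γ₁ ψ) = BT.Γ₂ ψ := hQ.2 ψ heig
  refine ⟨-(BT.Γ₁ ψ), ?_, ?_⟩
  · have hKab : A (BT.Γ₁ ψAB) - B (BT.Γ₂ ψAB) = 0 := by
      have := hK
      rw [LinearMap.mem_ker] at this
      simpa using this
    have hΓ2 : BT.Γ₂ ψ = BT.Γ₂ ψAB - BT.Γ₂ ψ0 := by rw [hψdef, map_sub]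
    have hΓ1 : BT.Γ₁ ψ = BT.Γ₁ ψAB := by rw [hψdef, map_sub, hΓ10, sub_zero]
    have hB0 : BT.Γ₂ ψ0 = adjoint γzbar f := gamma_adjoint_eq S BT z γzbar hγbar ψ0 hΓ10 f hEq0
    simp only [ContinuousLinearMap.sub_apply, ContinuousLinearMap.comp_apply, map_neg]
    rw [hQψ, hΓ2, hΓ1, map_sub, hB0]
    rw [sub_eq_zero] at hKab
    rw [← hKab]
    abel
  · rw [map_neg, hγψ, hψc, hcoeAB, hcoe0, hφ'c, hφ0c]
    abel

/-- Krein's resolvent formula, non-normalized parameters. Assume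
`A B* = B A*` and `ker M^{A,B} = 0`. For `z` in the intersection of the resolvent sets of
`H^{A,B}` and `H⁰`: the operator `BQ(z) − A` is injective, every `B γ(z̄)* f` lies in its
range, and `(H^{A,B} − z)⁻¹ f = (H⁰ − z)⁻¹ f − γ(z) (BQ(z) − A)⁻¹ B γ(z̄)* f`. -/
theorem krein_resolvent_formula_nonnormalized (S : H →ₗ.[ℂ] H)
    (hdense : Dense (S.domain : Set H)) (hclosed : S.IsClosed) (hsymm : IsSymmetricPMap S)
    (BT : BoundaryTriple S G) (A B : G →L[ℂ] G)
    (hAB : A ∘L adjoint B = B ∘L adjoint A)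
    (hker : ∀ x : G × G, MAB A B x = 0 → x = 0) :
    ∀ z : ℂ, InResolventSet (HAB S BT A B) z → InResolventSet (H0 S BT) z →
      ∀ (γz γzbar : G →L[ℂ] H) (Qz : G →L[ℂ] G),
        IsGammaField S BT (starRingEnd ℂ z) γzbar → IsQFunction S BT z γz Qz →
        Function.Injective (B ∘L Qz - A) ∧
        (∀ f : H, ∃ u : G, (B ∘L Qz - A) u = B (adjoint γzbar f)) ∧
        ∀ R0 RAB : H →L[ℂ] H,
          IsResolventOf (H0 S BT) z R0 → IsResolventOf (HAB S BT A B) z RAB →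
          ∀ (f : H) (u : G), (B ∘L Qz - A) u = B (adjoint γzbar f) →
            RAB f = R0 f - γz u := by
  intro z hzAB hz0 γz γzbar Qz hγbar hQ
  obtain ⟨RAB0, hRAB0⟩ := hzAB
  obtain ⟨R00, hR00⟩ := hz0
  -- Injectivity of `B Q(z) - A`
  have hinj : Function.Injective (B ∘L Qz - A) := by
    intro u₁ u₂ h
    have hTu : (B ∘L Qz - A) (u₁ - u₂) = 0 := by rw [map_sub, h, sub_self]
    set u := u₁ - u₂ with hu
    obtain ⟨φ, hφc, hφeig, hφΓ⟩ := hQ.1.1 u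
    have hQφ : Qz (BT.Γ₁ φ) = BT.Γ₂ φ := hQ.2 φ hφeig
    have hmem : (φ : H) ∈ (HAB S BT A B).domain := by
      refine Submodule.mem_map_of_mem ?_
      rw [LinearMap.mem_ker]
      simp only [LinearMap.sub_apply, LinearMap.comp_apply, ContinuousLinearMap.coe_coe]
      rw [← hQφ, hφΓ]
      have h2 : B (Qz u) - A u = 0 := by
        simpa [ContinuousLinearMap.sub_apply, ContinuousLinearMap.comp_apply] using hTu
      rw [← neg_eq_zero, neg_sub]
      exact h2
    set φ' : (HAB S BT A B).domain := ⟨(φ : H), hmem⟩ with hφ'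
    obtain ⟨ψ, hψK, hψc, hψap⟩ := pmapRestrict_spec S.adjoint _ φ'
    have hψφ : ψ = φ := Subtype.coe_injective hψc
    have h0 : HAB S BT A B φ' - z • ((φ' : H)) = 0 := by
      have hcoe : ((φ' : H)) = (φ : H) := rfl
      have hψap' : HAB S BT A B φ' = S.adjoint ψ := hψap
      rw [hψap', hψφ, hφeig, hcoe, sub_self]
    have hfix := hRAB0.2 φ'
    rw [h0, map_zero] at hfix
    have hφ0 : φ = 0 := Subtype.ext hfix.symm
    have : u = 0 := by rw [← hφΓ, hφ0, map_zero]
    rw [← sub_eq_zero]; exact this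
  refine ⟨hinj, ?_, ?_⟩
  · intro f
    obtain ⟨u, hu, -⟩ := krein_key S BT A B z γz γzbar Qz hγbar hQ R00 RAB0 hR00 hRAB0 f
    exact ⟨u, hu⟩
  · intro R0 RAB hR0 hRAB f u hu
    obtain ⟨u₀, hu₀, hform⟩ := krein_key S BT A B z γz γzbar Qz hγbar hQ R0 RAB hR0 hRAB f
    have : u = u₀ := hinj (by rw [hu, hu₀])
    rw [this]; exact hform
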